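/- arXiv:1411.5063 — 2 statements merged into one kernel-verified Lean document; each statement's English description precedes it below -/
import Mathlib

section
/- Let d ≥ 4, f₂ = x₀^{d-1}x₁ + x₂^d ∈ ℂ[x₀,x₁,x₂], and let t be an integer with 2 ≤ t ≤ d−1. A homogeneous polynomial g of degree t in ℂ[y₀,y₁,y₂] annihilates f₂ (i.e. g(∂₀,∂₁,∂₂)f₂ = 0) if and only if g belongs to the ideal generated by y₀y₂, y₁², y₁y₂; equivalently, the degree-t part of the apolar ideal f₂^⊥ equals the degree-t part of the ideal (y₀y₂, y₁², y₁y₂). -/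
open MvPolynomial

/-- The differential action of `g ∈ ℂ[y₀,…,y_{n-1}]` on `f ∈ ℂ[x₀,…,x_{n-1}]`:
`g(∂₀,…,∂_{n-1}) f`, obtained by substituting the partial derivative `∂/∂xᵢ` for `yᵢ`. -/
noncomputable def diffOp {n : ℕ} (g f : MvPolynomial (Fin n) ℂ) : MvPolynomial (Fin n) ℂ :=
  g.support.sum fun m =>
    g.coeff m •
      ((List.ofFn fun i : Fin n =>
        ((MvPolynomial.pderiv i).toLinearMap ^ (m i) :
          Module.End ℂ (MvPolynomial (Fin n) ℂ))).prod f)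

lemma pow_pderiv_monomial (i : Fin 3) (k : ℕ) (μ : Fin 3 →₀ ℕ) (c : ℂ) :
    ((MvPolynomial.pderiv i).toLinearMap ^ k : Module.End ℂ (MvPolynomial (Fin 3) ℂ))
        (monomial μ c) =
      monomial (μ - Finsupp.single i k) (c * ((μ i).descFactorial k : ℂ)) := by
  induction k with
  | zero => simp
  | succ k ih =>
    rw [pow_succ', Module.End.mul_apply, ih]
    have h1 : μ - Finsupp.single i k - Finsupp.single i 1 = μ - Finsupp.single i (k + 1) := by
      rw [tsub_tsub, ← Finsupp.single_add]
    have h2 : (μ - Finsupp.single i k) i = μ i - k := by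
      simp [Finsupp.tsub_apply]
    have h3 : ((μ i).descFactorial (k+1) : ℂ)
        = ((μ i).descFactorial k : ℂ) * ((μ i - k : ℕ) : ℂ) := by
      rw [Nat.descFactorial_succ]; push_cast; ring
    simp only [Derivation.coeFn_coe, pderiv_monomial, h1, h2, h3]
    ring_nf

lemma prodD_monomial (m μ : Fin 3 →₀ ℕ) (c : ℂ) :
    ((List.ofFn fun i : Fin 3 =>
        ((MvPolynomial.pderiv i).toLinearMap ^ (m i) :
          Module.End ℂ (MvPolynomial (Fin 3) ℂ))).prod) (monomial μ c)
    = monomial (μ - m)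
        (c * ((μ 0).descFactorial (m 0) : ℂ) * ((μ 1).descFactorial (m 1) : ℂ)
           * ((μ 2).descFactorial (m 2) : ℂ)) := by
  rw [show (List.ofFn fun i : Fin 3 =>
        ((MvPolynomial.pderiv i).toLinearMap ^ (m i) :
          Module.End ℂ (MvPolynomial (Fin 3) ℂ))) =
      [(MvPolynomial.pderiv (0:Fin 3)).toLinearMap ^ (m 0),
       (MvPolynomial.pderiv (1:Fin 3)).toLinearMap ^ (m 1),
       (MvPolynomial.pderiv (2:Fin 3)).toLinearMap ^ (m 2)] from by
    simp [List.ofFn_succ]]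
  rw [List.prod_cons, List.prod_cons, List.prod_singleton, Module.End.mul_apply,
    Module.End.mul_apply, pow_pderiv_monomial, pow_pderiv_monomial, pow_pderiv_monomial]
  have e1 : (μ - Finsupp.single (2:Fin 3) (m 2)) 1 = μ 1 := by simp [Finsupp.tsub_apply]
  have e0 : ((μ - Finsupp.single (2:Fin 3) (m 2) - Finsupp.single 1 (m 1) : Fin 3 →₀ ℕ)) 0
      = μ 0 := by
    simp [Finsupp.tsub_apply]
  rw [e1, e0, tsub_tsub, tsub_tsub]
  rw [show Finsupp.single (2:Fin 3) (m 2) + (Finsupp.single 1 (m 1) + Finsupp.single 0 (m 0)) = m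
      from by ext i; fin_cases i <;> simp]
  ring_nf

lemma deg3 (m : Fin 3 →₀ ℕ) : m.degree = m 0 + m 1 + m 2 := by
  rw [Finsupp.degree_apply, Finset.sum_subset (Finset.subset_univ m.support)
    (fun i _ hi => Finsupp.notMem_support_iff.mp hi), Fin.sum_univ_three]

theorem stmt_1 (d : ℕ) (hd : 4 ≤ d)
    (f₂ : MvPolynomial (Fin 3) ℂ) (hf₂ : f₂ = X 0 ^ (d - 1) * X 1 + X 2 ^ d)
    (t : ℕ) (ht : 2 ≤ t) (ht' : t ≤ d - 1)
    (g : MvPolynomial (Fin 3) ℂ) (hg : g.IsHomogeneous t) :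
    diffOp g f₂ = 0 ↔
      g ∈ Ideal.span ({X 0 * X 2, X 1 ^ 2, X 1 * X 2} : Set (MvPolynomial (Fin 3) ℂ)) := by
  classical
  set ma : Fin 3 →₀ ℕ := Finsupp.single 0 t with hma
  set mb : Fin 3 →₀ ℕ := Finsupp.single 0 (t-1) + Finsupp.single 1 1 with hmb
  set mc : Fin 3 →₀ ℕ := Finsupp.single 2 t with hmc
  set μ₁ : Fin 3 →₀ ℕ := Finsupp.single 0 (d-1) + Finsupp.single 1 1 with hμ₁
  set μ₂ : Fin 3 →₀ ℕ := Finsupp.single 2 d with hμ₂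
  have hμ₁0 : μ₁ 0 = d - 1 := by simp [hμ₁, Finsupp.single_apply]
  have hμ₁1 : μ₁ 1 = 1 := by simp [hμ₁, Finsupp.single_apply]
  have hμ₁2 : μ₁ 2 = 0 := by simp [hμ₁, Finsupp.single_apply]
  have hμ₂0 : μ₂ 0 = 0 := by simp [hμ₂, Finsupp.single_apply]
  have hμ₂1 : μ₂ 1 = 0 := by simp [hμ₂, Finsupp.single_apply]
  have hμ₂2 : μ₂ 2 = d := by simp [hμ₂, Finsupp.single_apply]
  have hma0 : ma 0 = t := by simp [hma]
  have hma1 : ma 1 = 0 := by simp [hma, Finsupp.single_apply]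
  have hma2 : ma 2 = 0 := by simp [hma, Finsupp.single_apply]
  have hmb0 : mb 0 = t - 1 := by simp [hmb, Finsupp.single_apply]
  have hmb1 : mb 1 = 1 := by simp [hmb, Finsupp.single_apply]
  have hmb2 : mb 2 = 0 := by simp [hmb, Finsupp.single_apply]
  have hmc0 : mc 0 = 0 := by simp [hmc, Finsupp.single_apply]
  have hmc1 : mc 1 = 0 := by simp [hmc, Finsupp.single_apply]
  have hmc2 : mc 2 = t := by simp [hmc, Finsupp.single_apply]
  have hf₂m : f₂ = monomial μ₁ 1 + monomial μ₂ 1 := by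
    rw [hf₂, ← pow_one (X 1 : MvPolynomial (Fin 3) ℂ), X_pow_eq_monomial, X_pow_eq_monomial,
      X_pow_eq_monomial, monomial_mul, one_mul, hμ₁, hμ₂]
  -- the key formula for diffOp g f₂
  have key : diffOp g f₂ = ∑ m ∈ g.support, coeff m g •
      (monomial (μ₁ - m) (((d-1).descFactorial (m 0) * Nat.descFactorial 1 (m 1)
          * Nat.descFactorial 0 (m 2) : ℕ) : ℂ)
       + monomial (μ₂ - m) ((Nat.descFactorial 0 (m 0) * Nat.descFactorial 0 (m 1)
          * d.descFactorial (m 2) : ℕ) : ℂ)) := by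
    unfold diffOp
    refine Finset.sum_congr rfl fun m _ => ?_
    rw [hf₂m, map_add, prodD_monomial, prodD_monomial, hμ₁0, hμ₁1, hμ₁2, hμ₂0, hμ₂1, hμ₂2]
    push_cast
    ring_nf
  have hdeg : ∀ m ∈ g.support, m 0 + m 1 + m 2 = t := by
    intro m hm
    rw [← deg3]
    by_contra h
    exact (mem_support_iff.mp hm) (hg.coeff_eq_zero h)
  have classA : ∀ m : Fin 3 →₀ ℕ, m 0 + m 1 + m 2 = t → m ≠ ma → m ≠ mb →
      (d-1).descFactorial (m 0) * Nat.descFactorial 1 (m 1) * Nat.descFactorial 0 (m 2) = 0 := by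
    intro m hsum hna hnb
    by_cases h2 : m 2 = 0
    · by_cases h1 : 2 ≤ m 1
      · have : Nat.descFactorial 1 (m 1) = 0 := Nat.descFactorial_eq_zero_iff_lt.mpr (by omega)
        simp [this]
      · exfalso
        by_cases h1' : m 1 = 0
        · refine hna ?_
          ext i; fin_cases i <;> simp [hma, Finsupp.single_apply] <;> omega
        · refine hnb ?_
          ext i; fin_cases i <;> simp [hmb, Finsupp.single_apply] <;> omega
    · have : Nat.descFactorial 0 (m 2) = 0 := Nat.descFactorial_eq_zero_iff_lt.mpr (by omega)
      simp [this]
  have classB : ∀ m : Fin 3 →₀ ℕ, m 0 + m 1 + m 2 = t → m ≠ mc →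
      Nat.descFactorial 0 (m 0) * Nat.descFactorial 0 (m 1) * d.descFactorial (m 2) = 0 := by
    intro m hsum hnc
    by_cases h0 : m 0 = 0
    · by_cases h1 : m 1 = 0
      · exfalso
        refine hnc ?_
        ext i; fin_cases i <;> simp [hmc, Finsupp.single_apply] <;> omega
      · have : Nat.descFactorial 0 (m 1) = 0 := Nat.descFactorial_eq_zero_iff_lt.mpr (by omega)
        simp [this]
    · have : Nat.descFactorial 0 (m 0) = 0 := Nat.descFactorial_eq_zero_iff_lt.mpr (by omega)
      simp [this]
  -- coordinate facts about the three target exponents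
  have qa1 : (μ₁ - ma : Fin 3 →₀ ℕ) 1 = 1 := by
    rw [Finsupp.tsub_apply, hμ₁1, hma1]
  have qb1 : (μ₁ - mb : Fin 3 →₀ ℕ) 1 = 0 := by
    rw [Finsupp.tsub_apply, hμ₁1, hmb1]
  have qc1 : (μ₂ - mc : Fin 3 →₀ ℕ) 1 = 0 := by
    rw [Finsupp.tsub_apply, hμ₂1, hmc1]
  have qb0 : (μ₁ - mb : Fin 3 →₀ ℕ) 0 = d - t := by
    rw [Finsupp.tsub_apply, hμ₁0, hmb0]; omega
  have qc0 : (μ₂ - mc : Fin 3 →₀ ℕ) 0 = 0 := by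
    rw [Finsupp.tsub_apply, hμ₂0, hmc0]
  have hdt : 0 < d - t := by omega
  -- nonvanishing of the three coefficients
  have hAa : ((d-1).descFactorial t : ℕ) ≠ 0 := by
    rw [Ne, Nat.descFactorial_eq_zero_iff_lt]; omega
  have hAb : ((d-1).descFactorial (t-1) : ℕ) ≠ 0 := by
    rw [Ne, Nat.descFactorial_eq_zero_iff_lt]; omega
  have hBc : (d.descFactorial t : ℕ) ≠ 0 := by
    rw [Ne, Nat.descFactorial_eq_zero_iff_lt]; omega
  have hsa : ma 0 + ma 1 + ma 2 = t := by rw [hma0, hma1, hma2]; omega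
  have hsb : mb 0 + mb 1 + mb 2 = t := by rw [hmb0, hmb1, hmb2]; omega
  have hsc : mc 0 + mc 1 + mc 2 = t := by rw [hmc0, hmc1, hmc2]; omega
  -- the three coefficient-extraction identities
  have EA : coeff (μ₁ - ma) (diffOp g f₂) = coeff ma g * ((d-1).descFactorial t : ℂ) := by
    rw [key, coeff_sum]
    rw [Finset.sum_eq_single ma]
    · have hB0 : Nat.descFactorial 0 (ma 0) * Nat.descFactorial 0 (ma 1)
          * d.descFactorial (ma 2) = 0 := by
        rw [hma0, Nat.descFactorial_eq_zero_iff_lt.mpr (by omega)]; simp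
      rw [coeff_smul, hB0, Nat.cast_zero, monomial_zero, add_zero, coeff_monomial,
        if_pos rfl, hma0, hma1, hma2]
      simp [smul_eq_mul]
    · intro m hm hne
      have hs := hdeg m hm
      rw [coeff_smul, coeff_add, coeff_monomial, coeff_monomial]
      have hAz : μ₁ - m = μ₁ - ma →
          (d-1).descFactorial (m 0) * Nat.descFactorial 1 (m 1)
            * Nat.descFactorial 0 (m 2) = 0 := by
        intro h1
        refine classA m hs hne fun e => ?_
        subst e
        have := DFunLike.congr_fun h1 1
        rw [qb1, qa1] at this; omega
      have hBz : μ₂ - m = μ₁ - ma →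
          Nat.descFactorial 0 (m 0) * Nat.descFactorial 0 (m 1)
            * d.descFactorial (m 2) = 0 := by
        intro h2
        refine classB m hs fun e => ?_
        subst e
        have := DFunLike.congr_fun h2 1
        rw [qc1, qa1] at this; omega
      split_ifs with h1 h2 h2
      · rw [hAz h1, hBz h2]; simp
      · rw [hAz h1]; simp
      · rw [hBz h2]; simp
      · simp
    · intro h
      rw [notMem_support_iff.mp h]
      simp
  have EB : coeff (μ₁ - mb) (diffOp g f₂) = coeff mb g * ((d-1).descFactorial (t-1) : ℂ) := by
    rw [key, coeff_sum]
    rw [Finset.sum_eq_single mb]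
    · have hB0 : Nat.descFactorial 0 (mb 0) * Nat.descFactorial 0 (mb 1)
          * d.descFactorial (mb 2) = 0 := by
        rw [hmb1, Nat.descFactorial_eq_zero_iff_lt.mpr (by omega)]; simp
      rw [coeff_smul, hB0, Nat.cast_zero, monomial_zero, add_zero, coeff_monomial,
        if_pos rfl, hmb0, hmb1, hmb2]
      simp [smul_eq_mul]
    · intro m hm hne
      have hs := hdeg m hm
      rw [coeff_smul, coeff_add, coeff_monomial, coeff_monomial]
      have hAz : μ₁ - m = μ₁ - mb →
          (d-1).descFactorial (m 0) * Nat.descFactorial 1 (m 1)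
            * Nat.descFactorial 0 (m 2) = 0 := by
        intro h1
        refine classA m hs (fun e => ?_) hne
        subst e
        have := DFunLike.congr_fun h1 1
        rw [qa1, qb1] at this; omega
      have hBz : μ₂ - m = μ₁ - mb →
          Nat.descFactorial 0 (m 0) * Nat.descFactorial 0 (m 1)
            * d.descFactorial (m 2) = 0 := by
        intro h2
        refine classB m hs fun e => ?_
        subst e
        have := DFunLike.congr_fun h2 0
        rw [qc0, qb0] at this; omega
      split_ifs with h1 h2 h2
      · rw [hAz h1, hBz h2]; simp
      · rw [hAz h1]; simp
      · rw [hBz h2]; simp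
      · simp
    · intro h
      rw [notMem_support_iff.mp h]
      simp
  have EC : coeff (μ₂ - mc) (diffOp g f₂) = coeff mc g * (d.descFactorial t : ℂ) := by
    rw [key, coeff_sum]
    rw [Finset.sum_eq_single mc]
    · have hA0 : (d-1).descFactorial (mc 0) * Nat.descFactorial 1 (mc 1)
          * Nat.descFactorial 0 (mc 2) = 0 := by
        have h0 : Nat.descFactorial 0 (mc 2) = 0 :=
          Nat.descFactorial_eq_zero_iff_lt.mpr (by rw [hmc2]; omega)
        simp [h0]
      rw [coeff_smul, hA0, Nat.cast_zero, monomial_zero, zero_add, coeff_monomial,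
        if_pos rfl, hmc0, hmc1, hmc2]
      simp [smul_eq_mul]
    · intro m hm hne
      have hs := hdeg m hm
      rw [coeff_smul, coeff_add, coeff_monomial, coeff_monomial]
      have hAz : μ₁ - m = μ₂ - mc →
          (d-1).descFactorial (m 0) * Nat.descFactorial 1 (m 1)
            * Nat.descFactorial 0 (m 2) = 0 := by
        intro h1
        refine classA m hs (fun e => ?_) (fun e => ?_)
        · subst e
          have := DFunLike.congr_fun h1 1
          rw [qa1, qc1] at this; omega
        · subst e
          have := DFunLike.congr_fun h1 0
          rw [qb0, qc0] at this; omega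
      have hBz : μ₂ - m = μ₂ - mc →
          Nat.descFactorial 0 (m 0) * Nat.descFactorial 0 (m 1)
            * d.descFactorial (m 2) = 0 := fun _ => classB m hs hne
      split_ifs with h1 h2 h2
      · rw [hAz h1, hBz h2]; simp
      · rw [hAz h1]; simp
      · rw [hBz h2]; simp
      · simp
    · intro h
      rw [notMem_support_iff.mp h]
      simp
  -- diffOp vanishes iff the three special coefficients of g vanish
  have main : diffOp g f₂ = 0 ↔ coeff ma g = 0 ∧ coeff mb g = 0 ∧ coeff mc g = 0 := by
    constructor
    · intro h
      rw [h, coeff_zero] at EA EB EC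
      refine ⟨?_, ?_, ?_⟩
      · rcases mul_eq_zero.mp EA.symm with h' | h'
        · exact h'
        · exact absurd (Nat.cast_eq_zero.mp h') hAa
      · rcases mul_eq_zero.mp EB.symm with h' | h'
        · exact h'
        · exact absurd (Nat.cast_eq_zero.mp h') hAb
      · rcases mul_eq_zero.mp EC.symm with h' | h'
        · exact h'
        · exact absurd (Nat.cast_eq_zero.mp h') hBc
    · rintro ⟨h1, h2, h3⟩
      rw [key]
      refine Finset.sum_eq_zero fun m hm => ?_
      by_cases e1 : m = ma
      · rw [e1, h1, zero_smul]
      by_cases e2 : m = mb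
      · rw [e2, h2, zero_smul]
      by_cases e3 : m = mc
      · rw [e3, h3, zero_smul]
      rw [classA m (hdeg m hm) e1 e2, classB m (hdeg m hm) e3]
      simp
  -- membership in the ideal iff the three special coefficients vanish
  have gen1 : (X 0 * X 2 : MvPolynomial (Fin 3) ℂ)
      = monomial (Finsupp.single 0 1 + Finsupp.single 2 1) 1 := by
    rw [← pow_one (X 0 : MvPolynomial (Fin 3) ℂ), ← pow_one (X 2 : MvPolynomial (Fin 3) ℂ),
      X_pow_eq_monomial, X_pow_eq_monomial, monomial_mul, one_mul]
  have gen2 : (X 1 ^ 2 : MvPolynomial (Fin 3) ℂ) = monomial (Finsupp.single 1 2) 1 :=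
    X_pow_eq_monomial
  have gen3 : (X 1 * X 2 : MvPolynomial (Fin 3) ℂ)
      = monomial (Finsupp.single 1 1 + Finsupp.single 2 1) 1 := by
    rw [← pow_one (X 1 : MvPolynomial (Fin 3) ℂ), ← pow_one (X 2 : MvPolynomial (Fin 3) ℂ),
      X_pow_eq_monomial, X_pow_eq_monomial, monomial_mul, one_mul]
  have spanIff : g ∈ Ideal.span ({X 0 * X 2, X 1 ^ 2, X 1 * X 2} :
        Set (MvPolynomial (Fin 3) ℂ)) ↔
      coeff ma g = 0 ∧ coeff mb g = 0 ∧ coeff mc g = 0 := by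
    constructor
    · intro h
      rcases Ideal.mem_span_insert.mp h with ⟨a, z, hz, rfl⟩
      rcases Ideal.mem_span_insert.mp hz with ⟨b, w, hw, rfl⟩
      rcases Ideal.mem_span_singleton'.mp hw with ⟨c, rfl⟩
      have key1 : ∀ m₀ : Fin 3 →₀ ℕ,
          ¬ (Finsupp.single 0 1 + Finsupp.single 2 1 : Fin 3 →₀ ℕ) ≤ m₀ →
          ¬ (Finsupp.single 1 2 : Fin 3 →₀ ℕ) ≤ m₀ →
          ¬ (Finsupp.single 1 1 + Finsupp.single 2 1 : Fin 3 →₀ ℕ) ≤ m₀ →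
          coeff m₀ (a * (X 0 * X 2) + (b * X 1 ^ 2 + c * (X 1 * X 2))) = 0 := by
        intro m₀ n1 n2 n3
        rw [coeff_add, coeff_add, gen1, gen2, gen3, coeff_mul_monomial',
          coeff_mul_monomial', coeff_mul_monomial', if_neg n1, if_neg n2, if_neg n3]
        simp
      refine ⟨key1 ma ?_ ?_ ?_, key1 mb ?_ ?_ ?_, key1 mc ?_ ?_ ?_⟩ <;>
        · intro hle
          have w0 := Finsupp.le_def.mp hle 0
          have w1 := Finsupp.le_def.mp hle 1
          have w2 := Finsupp.le_def.mp hle 2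
          simp only [Finsupp.add_apply, Finsupp.single_apply] at w0 w1 w2
          norm_num at w0 w1 w2
          omega
    · rintro ⟨h1, h2, h3⟩
      rw [← support_sum_monomial_coeff g]
      refine Ideal.sum_mem _ fun m hm => ?_
      have hs := hdeg m hm
      have hcm : coeff m g ≠ 0 := mem_support_iff.mp hm
      have hna : m ≠ ma := fun e => hcm (by rw [e]; exact h1)
      have hnb : m ≠ mb := fun e => hcm (by rw [e]; exact h2)
      have hnc : m ≠ mc := fun e => hcm (by rw [e]; exact h3)
      by_cases hc1 : 2 ≤ m 1
      · have hle : Finsupp.single (1 : Fin 3) 2 ≤ m := by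
          rw [Finsupp.le_def]; intro i
          fin_cases i <;> simp [Finsupp.single_apply] <;> omega
        rw [show monomial m (coeff m g)
            = monomial (m - Finsupp.single 1 2) (coeff m g) * (X 1 ^ 2 : MvPolynomial (Fin 3) ℂ)
            from by rw [gen2, monomial_mul, mul_one, tsub_add_cancel_of_le hle]]
        exact Ideal.mul_mem_left _ _ (Ideal.subset_span (by simp))
      · by_cases hc2 : m 1 = 1
        · by_cases hc3 : 1 ≤ m 2
          · have hle : (Finsupp.single 1 1 + Finsupp.single 2 1 : Fin 3 →₀ ℕ) ≤ m := by
              rw [Finsupp.le_def]; intro i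
              fin_cases i <;> simp [Finsupp.single_apply] <;> omega
            rw [show monomial m (coeff m g)
                = monomial (m - (Finsupp.single 1 1 + Finsupp.single 2 1)) (coeff m g)
                    * (X 1 * X 2 : MvPolynomial (Fin 3) ℂ)
                from by rw [gen3, monomial_mul, mul_one, tsub_add_cancel_of_le hle]]
            exact Ideal.mul_mem_left _ _ (Ideal.subset_span (by simp))
          · exfalso
            refine hnb ?_
            ext i; fin_cases i <;> simp [hmb, Finsupp.single_apply] <;> omega
        · have h10 : m 1 = 0 := by omega
          by_cases hc4 : m 0 = 0
          · exfalso
            refine hnc ?_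
            ext i; fin_cases i <;> simp [hmc, Finsupp.single_apply] <;> omega
          · by_cases hc5 : m 2 = 0
            · exfalso
              refine hna ?_
              ext i; fin_cases i <;> simp [hma, Finsupp.single_apply] <;> omega
            · have hle : (Finsupp.single 0 1 + Finsupp.single 2 1 : Fin 3 →₀ ℕ) ≤ m := by
                rw [Finsupp.le_def]; intro i
                fin_cases i <;> simp [Finsupp.single_apply] <;> omega
              rw [show monomial m (coeff m g)
                  = monomial (m - (Finsupp.single 0 1 + Finsupp.single 2 1)) (coeff m g)
                      * (X 0 * X 2 : MvPolynomial (Fin 3) ℂ)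
                  from by rw [gen1, monomial_mul, mul_one, tsub_add_cancel_of_le hle]]
              exact Ideal.mul_mem_left _ _ (Ideal.subset_span (by simp))
  exact main.trans spanIff.symm
end

section
/- Let n ≥ 2 and let α, β ∈ ℂ be nonzero, and regard f = x₀⁴ + α·x₁⁴ + β·(x₀+x₁)⁴ as a homogeneous quartic in ℂ[x₀,x₁,…,xₙ]. Then a homogeneous quadratic g ∈ ℂ[y₀,y₁,…,yₙ] satisfies g(∂)f = 0 if and only if g lies in the ℂ-linear span of the quadratic monomials y_i·y_j with 0 ≤ i ≤ j ≤ n and j ≥ 2; equivalently, the space of quadratic annihilators of f equals the degree-2 part of the ideal (y₂,…,yₙ). -/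
open MvPolynomial

/-! ### Auxiliary lemmas -/

lemma pderiv_natCast' {N : ℕ} (i : Fin N) (k : ℕ) :
    pderiv i ((k : MvPolynomial (Fin N) ℂ)) = 0 := by
  rw [← map_natCast (C : ℂ →+* MvPolynomial (Fin N) ℂ) k, pderiv_C]

lemma prod_ofFn_eq_single' {M : Type*} [Monoid M] : ∀ {N : ℕ} (v : Fin N → M) (i : Fin N),
    (∀ k, k ≠ i → v k = 1) → (List.ofFn v).prod = v i := by
  intro N
  induction N with
  | zero => exact fun v i _ => i.elim0
  | succ N ih =>
    intro v i h
    rw [List.ofFn_succ, List.prod_cons]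
    cases i using Fin.cases with
    | zero =>
      have : (List.ofFn (fun k : Fin N => v k.succ)).prod = 1 := by
        apply List.prod_eq_one
        intro x hx
        obtain ⟨k, rfl⟩ := List.mem_ofFn.mp hx
        exact h _ (Fin.succ_ne_zero k)
      rw [this, mul_one]
    | succ i' =>
      rw [h 0 (Fin.succ_ne_zero i').symm, one_mul]
      exact ih _ i' fun k hk => h _ (fun e => hk (Fin.succ_injective _ e))

lemma prod_ofFn_eq_pair' {M : Type*} [Monoid M] : ∀ {N : ℕ} (v : Fin N → M) (i j : Fin N),
    i < j → (∀ k, k ≠ i → k ≠ j → v k = 1) → (List.ofFn v).prod = v i * v j := by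
  intro N
  induction N with
  | zero => exact fun v i _ _ _ => i.elim0
  | succ N ih =>
    intro v i j hij h
    rw [List.ofFn_succ, List.prod_cons]
    cases j using Fin.cases with
    | zero => exact absurd hij (by simp [Fin.not_lt, Fin.zero_le])
    | succ j' =>
      cases i using Fin.cases with
      | zero =>
        congr 1
        exact prod_ofFn_eq_single' _ j' fun k hk =>
          h _ (Fin.succ_ne_zero k) (fun e => hk (Fin.succ_injective _ e))
      | succ i' =>
        rw [h 0 (Fin.succ_ne_zero i').symm (Fin.succ_ne_zero j').symm, one_mul]
        exact ih _ i' j' (by simpa using hij)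
          fun k hk1 hk2 => h _ (fun e => hk1 (Fin.succ_injective _ e))
            (fun e => hk2 (Fin.succ_injective _ e))

noncomputable def Dop {N : ℕ} (m : Fin N →₀ ℕ) : Module.End ℂ (MvPolynomial (Fin N) ℂ) :=
  (List.ofFn fun i : Fin N =>
    ((MvPolynomial.pderiv i).toLinearMap ^ (m i) :
      Module.End ℂ (MvPolynomial (Fin N) ℂ))).prod

lemma Dop_pair {N : ℕ} (i j : Fin N) (hij : i ≤ j) (f : MvPolynomial (Fin N) ℂ) :
    Dop (Finsupp.single i 1 + Finsupp.single j 1) f = pderiv i (pderiv j f) := by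
  rcases eq_or_lt_of_le hij with rfl | hlt
  · have : Dop (Finsupp.single i 1 + Finsupp.single i 1) =
        ((pderiv i).toLinearMap : Module.End ℂ (MvPolynomial (Fin N) ℂ)) ^ 2 := by
      rw [Dop]
      rw [prod_ofFn_eq_single' _ i]
      · simp [Finsupp.single_apply]
      · intro k hk
        simp [Finsupp.single_apply, Ne.symm hk, hk]
    rw [this, pow_two, Module.End.mul_apply]
    rfl
  · have : Dop (Finsupp.single i 1 + Finsupp.single j 1) =
        ((pderiv i).toLinearMap : Module.End ℂ (MvPolynomial (Fin N) ℂ)) *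
          (pderiv j).toLinearMap := by
      rw [Dop, prod_ofFn_eq_pair' _ i j hlt]
      · simp [Finsupp.single_apply, hlt.ne, hlt.ne']
      · intro k hk1 hk2
        simp [Finsupp.single_apply, Ne.symm hk1, Ne.symm hk2]
    rw [this, Module.End.mul_apply]
    rfl

theorem diffOp_eq {N : ℕ} (g f : MvPolynomial (Fin N) ℂ) :
    diffOp g f = Finsupp.linearCombination ℂ (fun m => Dop m f) (AddMonoidAlgebra.coeff g) := by
  rw [Finsupp.linearCombination_apply, Finsupp.sum]
  rfl

lemma diffOp_monomial {N : ℕ} (m : Fin N →₀ ℕ) (c : ℂ) (f : MvPolynomial (Fin N) ℂ) :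
    diffOp (monomial m c) f = c • Dop m f := by
  rw [diffOp_eq]
  have hmc : AddMonoidAlgebra.coeff (monomial m c) = Finsupp.single m c := rfl
  rw [hmc]
  exact Finsupp.linearCombination_single ℂ (v := fun m => Dop m f) c m

lemma X_mul_X_eq_monomial {N : ℕ} (i j : Fin N) :
    (X i * X j : MvPolynomial (Fin N) ℂ) =
      monomial (Finsupp.single i 1 + Finsupp.single j 1) 1 := by
  rw [show (X i : MvPolynomial (Fin N) ℂ) = monomial (Finsupp.single i 1) 1 from rfl,
    show (X j : MvPolynomial (Fin N) ℂ) = monomial (Finsupp.single j 1) 1 from rfl,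
    monomial_mul, one_mul]

lemma diffOp_XX {N : ℕ} (i j : Fin N) (hij : i ≤ j) (f : MvPolynomial (Fin N) ℂ) :
    diffOp (X i * X j) f = pderiv i (pderiv j f) := by
  rw [X_mul_X_eq_monomial, diffOp_monomial, one_smul, Dop_pair _ _ hij]

lemma deg_one_classify' {N : ℕ} (m : Fin N →₀ ℕ) (h : (∑ x ∈ m.support, m x) = 1) :
    ∃ j, m = Finsupp.single j 1 := by
  classical
  have hne : m.support.Nonempty := by
    rcases Finset.eq_empty_or_nonempty m.support with he | hne
    · exfalso; rw [he] at h; simp at h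
    · exact hne
  obtain ⟨j, hj⟩ := hne
  have hj1 : 1 ≤ m j := Nat.one_le_iff_ne_zero.mpr (Finsupp.mem_support_iff.mp hj)
  refine ⟨j, ?_⟩
  have hrest : ∀ k ∈ m.support, k ≠ j → m k = 0 := by
    intro k hk hkj
    by_contra hk0
    have h2 : 2 ≤ ∑ x ∈ m.support, m x := by
      have e1 : m j + ∑ x ∈ m.support.erase j, m x = ∑ x ∈ m.support, m x :=
        Finset.add_sum_erase _ m hj
      have hk' : k ∈ m.support.erase j := Finset.mem_erase.mpr ⟨hkj, hk⟩
      have e2 := Finset.single_le_sum (f := m) (fun i _ => Nat.zero_le _) hk'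
      omega
    omega
  have hmj : m j = 1 := by
    have e1 : m j + ∑ x ∈ m.support.erase j, m x = ∑ x ∈ m.support, m x :=
      Finset.add_sum_erase _ m hj
    have e2 : ∑ x ∈ m.support.erase j, m x = 0 := by
      apply Finset.sum_eq_zero
      intro k hk
      exact hrest k (Finset.mem_of_mem_erase hk) (Finset.mem_erase.mp hk).1
    omega
  ext k
  rcases eq_or_ne k j with rfl | hk
  · simp [hmj]
  · rw [Finsupp.single_apply, if_neg (Ne.symm hk)]
    by_cases hks : k ∈ m.support
    · exact hrest k hks hk
    · exact Finsupp.notMem_support_iff.mp hks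

lemma deg_two_classify' {N : ℕ} (m : Fin N →₀ ℕ) (h : (∑ x ∈ m.support, m x) = 2) :
    ∃ i j, i ≤ j ∧ m = Finsupp.single i 1 + Finsupp.single j 1 := by
  classical
  have hne : m.support.Nonempty := by
    rcases Finset.eq_empty_or_nonempty m.support with he | hne
    · exfalso; rw [he] at h; simp at h
    · exact hne
  obtain ⟨i, hi⟩ := hne
  have hi1 : 1 ≤ m i := Nat.one_le_iff_ne_zero.mpr (Finsupp.mem_support_iff.mp hi)
  set m' := m - Finsupp.single i 1 with hm'
  have hmm : m = Finsupp.single i 1 + m' := by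
    ext k
    rcases eq_or_ne k i with rfl | hk
    · simp [hm', Finsupp.single_apply]; omega
    · simp [hm', Finsupp.single_apply, Ne.symm hk, hk]
  have hsum' : (∑ x ∈ m'.support, m' x) = 1 := by
    have hs : (m.sum fun _ k => k) = 2 := by simpa [Finsupp.sum] using h
    rw [hmm] at hs
    rw [Finsupp.sum_add_index' (fun _ => rfl) (fun _ _ _ => rfl)] at hs
    simp only [Finsupp.sum_single_index] at hs
    have : (m'.sum fun _ k => k) = 1 := by omega
    simpa [Finsupp.sum] using this
  exact (deg_one_classify' m' hsum').elim fun j hj =>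
    (le_total i j).elim
      (fun hij => ⟨i, j, hij, by rw [hmm, hj]⟩)
      (fun hij => ⟨j, i, hij, by rw [hmm, hj, add_comm]⟩)

theorem stmt_16 (n : ℕ) (hn : 2 ≤ n) (α β : ℂ) (hα : α ≠ 0) (hβ : β ≠ 0)
    (f : MvPolynomial (Fin (n + 1)) ℂ)
    (hf : f = X 0 ^ 4 + C α * X 1 ^ 4 + C β * (X 0 + X 1) ^ 4)
    (g : MvPolynomial (Fin (n + 1)) ℂ) (hg : g.IsHomogeneous 2) :
    diffOp g f = 0 ↔
      g ∈ Submodule.span ℂ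
        {p : MvPolynomial (Fin (n + 1)) ℂ |
          ∃ i j : Fin (n + 1), i ≤ j ∧ 2 ≤ (j : ℕ) ∧ p = X i * X j} := by
  classical
  set S : Set (MvPolynomial (Fin (n + 1)) ℂ) :=
    {p : MvPolynomial (Fin (n + 1)) ℂ |
      ∃ i j : Fin (n + 1), i ≤ j ∧ 2 ≤ (j : ℕ) ∧ p = X i * X j} with hS
  -- basic Fin facts
  have hv1 : ((1 : Fin (n + 1)) : ℕ) = 1 := by
    rw [Fin.val_one']; exact Nat.mod_eq_of_lt (by omega)
  have h10 : (1 : Fin (n + 1)) ≠ 0 := by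
    intro h; have := congrArg Fin.val h; rw [hv1] at this; simp at this
  have h01 : (0 : Fin (n + 1)) ≠ 1 := Ne.symm h10
  -- vanishing of pderiv j f for j ≥ 2
  have hpd : ∀ j : Fin (n + 1), 2 ≤ (j : ℕ) → pderiv j f = 0 := by
    intro j hj
    have hj0 : (0 : Fin (n + 1)) ≠ j := by
      intro h; rw [← h] at hj; simp at hj
    have hj1 : (1 : Fin (n + 1)) ≠ j := by
      intro h; rw [← h, hv1] at hj; omega
    subst hf
    simp [pderiv_pow, pderiv_C_mul, pderiv_X_of_ne hj0, pderiv_X_of_ne hj1]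
  -- the kernel of diffOp · f contains S
  have hker : ∀ p ∈ S, diffOp p f = 0 := by
    rintro p ⟨i, j, hij, hj2, rfl⟩
    rw [diffOp_XX _ _ hij, hpd j hj2, map_zero]
  -- reverse direction
  have hdadd : ∀ x y : MvPolynomial (Fin (n+1)) ℂ,
      diffOp (x + y) f = diffOp x f + diffOp y f := by
    intro x y
    rw [diffOp_eq, diffOp_eq, diffOp_eq]
    exact map_add (Finsupp.linearCombination ℂ (fun m => Dop m f)) (AddMonoidAlgebra.coeff x) (AddMonoidAlgebra.coeff y)
  have hdsmul : ∀ (r : ℂ) (x : MvPolynomial (Fin (n+1)) ℂ),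
      diffOp (r • x) f = r • diffOp x f := by
    intro r x
    rw [diffOp_eq, diffOp_eq]
    exact map_smul (Finsupp.linearCombination ℂ (fun m => Dop m f)) r (AddMonoidAlgebra.coeff x)
  have hdzero : diffOp (0 : MvPolynomial (Fin (n+1)) ℂ) f = 0 := by
    rw [diffOp_eq]
    exact map_zero (Finsupp.linearCombination ℂ (fun m => Dop m f))
  have hrev : ∀ h ∈ Submodule.span ℂ S, diffOp h f = 0 := by
    intro h hh
    induction hh using Submodule.span_induction with
    | mem x hx => exact hker x hx
    | zero => exact hdzero
    | add x y _ _ hx hy => rw [hdadd x y, hx, hy, add_zero]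
    | smul r x _ hx => rw [hdsmul r x, hx, smul_zero]
  constructor
  · intro hD
    -- coefficients of the bad monomials
    set a := coeff (Finsupp.single (0 : Fin (n+1)) 1 + Finsupp.single 0 1) g with ha
    set b := coeff (Finsupp.single (0 : Fin (n+1)) 1 + Finsupp.single 1 1) g with hb
    set c := coeff (Finsupp.single (1 : Fin (n+1)) 1 + Finsupp.single 1 1) g with hc
    set q : MvPolynomial (Fin (n+1)) ℂ :=
      C a * (X 0 * X 0) + C b * (X 0 * X 1) + C c * (X 1 * X 1) with hq
    -- coefficients of q at the bad monomials
    have hm00 : Finsupp.single (0 : Fin (n+1)) 1 + Finsupp.single 0 1 ≠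
        Finsupp.single 0 1 + Finsupp.single 1 1 := by
      intro h
      have := DFunLike.congr_fun h 1
      simp [Finsupp.single_apply, h01, h10] at this
    have hm01 : Finsupp.single (0 : Fin (n+1)) 1 + Finsupp.single 0 1 ≠
        Finsupp.single 1 1 + Finsupp.single 1 1 := by
      intro h
      have := DFunLike.congr_fun h 1
      simp [Finsupp.single_apply, h01, h10] at this
    have hm11 : Finsupp.single (0 : Fin (n+1)) 1 + Finsupp.single 1 1 ≠
        Finsupp.single 1 1 + Finsupp.single 1 1 := by
      intro h
      have := DFunLike.congr_fun h 0
      simp [Finsupp.single_apply, h01, h10] at this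
    have hq00 : coeff (Finsupp.single (0 : Fin (n+1)) 1 + Finsupp.single 0 1) q = a := by
      rw [hq]
      simp [X_mul_X_eq_monomial, coeff_monomial, Ne.symm hm00, Ne.symm hm01]
    have hq01 : coeff (Finsupp.single (0 : Fin (n+1)) 1 + Finsupp.single 1 1) q = b := by
      rw [hq]
      simp [X_mul_X_eq_monomial, coeff_monomial, hm00, Ne.symm hm11]
    have hq11 : coeff (Finsupp.single (1 : Fin (n+1)) 1 + Finsupp.single 1 1) q = c := by
      rw [hq]
      simp [X_mul_X_eq_monomial, coeff_monomial, hm01, hm11]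
    -- q is homogeneous of degree 2
    have hXX2 : ∀ i j : Fin (n+1), (X i * X j : MvPolynomial (Fin (n+1)) ℂ).IsHomogeneous 2 :=
      fun i j => (isHomogeneous_X _ _).mul (isHomogeneous_X _ _)
    have hqhom : q.IsHomogeneous 2 := by
      rw [hq]
      exact (((hXX2 0 0).C_mul a).add ((hXX2 0 1).C_mul b)).add ((hXX2 1 1).C_mul c)
    -- membership lemma: homogeneous of degree 2 with zero bad coefficients lies in span S
    have hspan : ∀ h : MvPolynomial (Fin (n+1)) ℂ, h.IsHomogeneous 2 →
        coeff (Finsupp.single (0 : Fin (n+1)) 1 + Finsupp.single 0 1) h = 0 →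
        coeff (Finsupp.single (0 : Fin (n+1)) 1 + Finsupp.single 1 1) h = 0 →
        coeff (Finsupp.single (1 : Fin (n+1)) 1 + Finsupp.single 1 1) h = 0 →
        h ∈ Submodule.span ℂ S := by
      intro h hhom h00 h01' h11
      rw [← support_sum_monomial_coeff h]
      apply Submodule.sum_mem
      intro m hm
      have hdeg : (∑ x ∈ m.support, m x) = 2 := by
        have := hhom (Finsupp.mem_support_iff.mp hm)
        simpa [Finsupp.weight, Finsupp.linearCombination, Finsupp.sum] using this
      obtain ⟨i, j, hij, rfl⟩ := deg_two_classify' m hdeg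
      by_cases hj2 : 2 ≤ (j : ℕ)
      · have hmem : (X i * X j : MvPolynomial (Fin (n+1)) ℂ) ∈ S := ⟨i, j, hij, hj2, rfl⟩
        have : (monomial (Finsupp.single i 1 + Finsupp.single j 1))
            (coeff (Finsupp.single i 1 + Finsupp.single j 1) h) =
            (coeff (Finsupp.single i 1 + Finsupp.single j 1) h) • (X i * X j) := by
          rw [X_mul_X_eq_monomial, smul_monomial, smul_eq_mul, mul_one]
        rw [this]
        exact Submodule.smul_mem _ _ (Submodule.subset_span hmem)
      · -- i ≤ j and j ≤ 1, so i, j ∈ {0, 1}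
        push_neg at hj2
        have hji : (i : ℕ) ≤ (j : ℕ) := hij
        have hcase : ∀ t : Fin (n+1), (t : ℕ) ≤ 1 → t = 0 ∨ t = 1 := by
          intro t ht
          interval_cases h : (t : ℕ)
          · left; exact Fin.ext (by simpa using h)
          · right; exact Fin.ext (by rw [hv1]; simpa using h)
        have hcz : coeff (Finsupp.single i 1 + Finsupp.single j 1) h = 0 := by
          rcases hcase j (by omega) with rfl | rfl
          · rcases hcase i (by omega) with rfl | rfl
            · exact h00
            · exact absurd hij (by rw [Fin.le_def, hv1]; simp)
          · rcases hcase i (by omega) with rfl | rfl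
            · exact h01'
            · exact h11
        rw [hcz, map_zero]
        exact Submodule.zero_mem _
    -- decompose g
    have hgq : (g - q).IsHomogeneous 2 := hg.sub hqhom
    have hgq_mem : g - q ∈ Submodule.span ℂ S := by
      refine hspan (g - q) hgq ?_ ?_ ?_
      · rw [coeff_sub, hq00, ← ha, sub_self]
      · rw [coeff_sub, hq01, ← hb, sub_self]
      · rw [coeff_sub, hq11, ← hc, sub_self]
    have hdq : diffOp q f = 0 := by
      have h1 : diffOp (g - q) f = 0 := hrev _ hgq_mem
      have h2 : diffOp g f = diffOp q f + diffOp (g - q) f := by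
        rw [← hdadd]
        congr 1
        ring
      rw [hD, h1, add_zero] at h2
      exact h2.symm
    -- compute the second derivatives of f
    have hd00 : pderiv 0 (pderiv 0 f) =
        12 * X 0 ^ 2 + 12 * C β * (X 0 + X 1) ^ 2 := by
      rw [hf]
      simp [pderiv_pow, pderiv_C_mul, pderiv_X_of_ne h10, pderiv_X_of_ne h01,
        pderiv_natCast', -Nat.cast_ofNat]
      ring
    have hd01 : pderiv 0 (pderiv 1 f) = 12 * C β * (X 0 + X 1) ^ 2 := by
      rw [hf]
      simp [pderiv_pow, pderiv_C_mul, pderiv_X_of_ne h10, pderiv_X_of_ne h01,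
        pderiv_natCast', -Nat.cast_ofNat]
      ring
    have hd11 : pderiv 1 (pderiv 1 f) =
        12 * C α * X 1 ^ 2 + 12 * C β * (X 0 + X 1) ^ 2 := by
      rw [hf]
      simp [pderiv_pow, pderiv_C_mul, pderiv_X_of_ne h10, pderiv_X_of_ne h01,
        pderiv_natCast', -Nat.cast_ofNat]
      ring
    -- expand diffOp q f
    have hEE : a • ((pderiv 0) ((pderiv 0) f)) + b • ((pderiv 0) ((pderiv 1) f)) +
        c • ((pderiv 1) ((pderiv 1) f)) = 0 := by
      have hcq : q = a • (X 0 * X 0) + b • (X 0 * X 1) + c • (X 1 * X 1) := by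
        rw [hq, smul_eq_C_mul, smul_eq_C_mul, smul_eq_C_mul]
      have h := hdq
      rw [hcq, hdadd, hdadd, hdsmul, hdsmul, hdsmul,
        diffOp_XX 0 0 le_rfl f, diffOp_XX 0 1 (Fin.zero_le _) f,
        diffOp_XX 1 1 le_rfl f] at h
      exact h
    rw [hd00, hd01, hd11] at hEE
    -- evaluate at three points
    have he : ∀ x y : ℂ,
        a * (12 * x ^ 2 + 12 * β * (x + y) ^ 2) + b * (12 * β * (x + y) ^ 2) +
          c * (12 * α * y ^ 2 + 12 * β * (x + y) ^ 2) = 0 := by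
      intro x y
      have := congrArg
        (eval (fun t : Fin (n+1) => if t = 0 then x else if t = 1 then y else 0)) hEE
      simp [smul_eval, h10, h01] at this
      linear_combination this
    have e1 := he 1 0
    have e2 := he 0 1
    have e3 := he 1 1
    have h4 : β * (a + b + c) = 0 := by linear_combination (e3 - e1 - e2) / 24
    have hsum : a + b + c = 0 := by
      rcases mul_eq_zero.mp h4 with h | h
      · exact absurd h hβ
      · exact h
    have ha0 : a = 0 := by linear_combination e1 / 12 - β * hsum
    have hc0 : c = 0 := by
      have hca : c * α = 0 := by linear_combination e2 / 12 - β * hsum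
      rcases mul_eq_zero.mp hca with h | h
      · exact h
      · exact absurd h hα
    have hb0 : b = 0 := by linear_combination hsum - ha0 - hc0
    have hqz : q = 0 := by
      rw [hq, ha0, hb0, hc0]
      simp
    rw [hqz, sub_zero] at hgq_mem
    exact hgq_mem
  · exact hrev g
end
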